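/- For a birth-and-death chain as above, suppose there exist constants C > 0, ε ∈ (0,1], and i₀ such that p_i/q_i ≤ 1 + 1/i + C/i^{1+ε} for all i ≥ i₀. Then the series ∑_{i=1}^∞ ∏_{n=1}^{i} (q_n/p_n) diverges. -/

import Mathlib

-- telescoping product
lemma tele (m : ℕ) : ∀ i, m ≤ i → ∏ n ∈ Finset.Ioc m i, ((n:ℝ)/((n:ℝ)+1)) = ((m:ℝ)+1)/((i:ℝ)+1) := by
  intro i hi
  induction i, hi using Nat.le_induction with
  | base =>
    rw [Finset.Ioc_self, Finset.prod_empty, div_self (by positivity)]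
  | succ i hi ih =>
    rw [Finset.prod_Ioc_succ_top hi, ih]
    have h1 : (0:ℝ) < (i:ℝ) + 1 := by positivity
    push_cast
    field_simp

set_option maxHeartbeats 800000 in
theorem stmt9 (p q : ℕ → ℝ) (h : ∀ i ≥ 1, 0 < p i ∧ p i < 1 ∧ q i = 1 - p i)
    (C ε : ℝ) (hC : 0 < C) (hε : 0 < ε ∧ ε ≤ 1) (i₀ : ℕ)
    (hratio : ∀ i ≥ i₀, 1 ≤ i → p i / q i ≤ 1 + 1/(i:ℝ) + C/(i:ℝ)^(1+ε)) :
    ¬ Summable (fun i : ℕ => ∏ n ∈ Finset.Icc 1 i, q n / p n) := by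
  intro hsum
  set m : ℕ := max i₀ 1 with hm
  have hm1 : 1 ≤ m := le_max_right _ _
  have hmi0 : i₀ ≤ m := le_max_left _ _
  -- positivities
  have hqp : ∀ n, 1 ≤ n → 0 < q n / p n := by
    intro n hn
    obtain ⟨hp0, hp1, hq⟩ := h n hn
    have : 0 < q n := by rw [hq]; linarith
    positivity
  set b : ℕ → ℝ := fun n => C/(n:ℝ)^(1+ε) with hbdef
  have hb0 : ∀ n, 0 ≤ b n := by
    intro n
    have : (0:ℝ) ≤ (n:ℝ)^(1+ε) := Real.rpow_nonneg (Nat.cast_nonneg n) _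
    exact div_nonneg hC.le this
  have hbsum : Summable b := by
    have h1 : Summable (fun n : ℕ => 1/(n:ℝ)^(1+ε)) :=
      Real.summable_one_div_nat_rpow.mpr (by linarith [hε.1])
    have := h1.mul_left C
    simpa [hbdef, mul_one_div, div_eq_mul_inv] using this
  set S : ℝ := ∑' n, b n with hS
  have hS0 : 0 ≤ S := tsum_nonneg hb0
  -- product of (1+b n) bounded by exp S
  have hexp : ∀ i : ℕ, ∏ n ∈ Finset.Ioc m i, (1 + b n) ≤ Real.exp S := by
    intro i
    calc ∏ n ∈ Finset.Ioc m i, (1 + b n)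
        ≤ ∏ n ∈ Finset.Ioc m i, Real.exp (b n) := by
          apply Finset.prod_le_prod
          · intro n _; have := hb0 n; linarith
          · intro n _; linarith [Real.add_one_le_exp (b n)]
      _ = Real.exp (∑ n ∈ Finset.Ioc m i, b n) := by rw [Real.exp_sum]
      _ ≤ Real.exp S := by
          apply Real.exp_le_exp.mpr
          exact hbsum.sum_le_tsum _ (fun n _ => hb0 n)
  have hexppos : (0:ℝ) < Real.exp S := Real.exp_pos S
  have hprodpos : ∀ i : ℕ, 0 < ∏ n ∈ Finset.Ioc m i, (1 + b n) := by
    intro i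
    apply Finset.prod_pos
    intro n _; have := hb0 n; linarith
  -- per-factor bound
  have hfac : ∀ n, m < n → ((n:ℝ)/((n:ℝ)+1)) * (1 + b n)⁻¹ ≤ q n / p n := by
    intro n hn
    have hn1 : 1 ≤ n := by omega
    have hni0 : i₀ ≤ n := by omega
    obtain ⟨hp0, hp1, hq⟩ := h n hn1
    have hq0 : 0 < q n := by rw [hq]; linarith
    have hpq0 : 0 < p n / q n := by positivity
    have hnR : (0:ℝ) < (n:ℝ) := by exact_mod_cast Nat.pos_of_ne_zero (by omega)
    have hbn := hb0 n
    have h1 : p n / q n ≤ (((n:ℝ)+1)/(n:ℝ)) * (1 + b n) := by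
      have h2 := hratio n hni0 hn1
      have h3 : (1:ℝ) + 1/(n:ℝ) + b n ≤ (((n:ℝ)+1)/(n:ℝ)) * (1 + b n) := by
        have : (((n:ℝ)+1)/(n:ℝ)) * (1 + b n) = 1 + 1/(n:ℝ) + b n + b n / (n:ℝ) := by
          field_simp; ring
        rw [this]
        have : 0 ≤ b n / (n:ℝ) := by positivity
        linarith
      calc p n / q n ≤ 1 + 1/(n:ℝ) + b n := h2
        _ ≤ _ := h3
    have h4 : ((((n:ℝ)+1)/(n:ℝ)) * (1 + b n))⁻¹ ≤ (p n / q n)⁻¹ :=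
      inv_anti₀ hpq0 h1
    have h5 : (p n / q n)⁻¹ = q n / p n := by rw [inv_div]
    have h6 : ((((n:ℝ)+1)/(n:ℝ)) * (1 + b n))⁻¹ = ((n:ℝ)/((n:ℝ)+1)) * (1 + b n)⁻¹ := by
      rw [mul_inv, inv_div]
    rw [h6, h5] at h4
    exact h4
  -- constant c0
  set c0 : ℝ := ∏ n ∈ Finset.Icc 1 m, q n / p n with hc0
  have hc0pos : 0 < c0 := Finset.prod_pos (fun n hn => hqp n (Finset.mem_Icc.mp hn).1)
  -- lower bound for the product term when i ≥ m
  have hterm : ∀ i, m ≤ i →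
      c0 * (((m:ℝ)+1)/((i:ℝ)+1)) * (Real.exp S)⁻¹ ≤ ∏ n ∈ Finset.Icc 1 i, q n / p n := by
    intro i hi
    have hsplit : (∏ n ∈ Finset.Icc 1 m, q n / p n) * ∏ n ∈ Finset.Ioc m i, q n / p n
        = ∏ n ∈ Finset.Icc 1 i, q n / p n := by
      have e : ∀ k : ℕ, Finset.Icc 1 k = Finset.Ioc 0 k := by
        intro k; ext x; simp [Nat.lt_iff_add_one_le]
      rw [e, e]
      exact Finset.prod_Ioc_consecutive _ (by omega) hi
    rw [← hsplit]
    have hlow : (((m:ℝ)+1)/((i:ℝ)+1)) * (Real.exp S)⁻¹ ≤ ∏ n ∈ Finset.Ioc m i, q n / p n := by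
      calc (((m:ℝ)+1)/((i:ℝ)+1)) * (Real.exp S)⁻¹
          ≤ (((m:ℝ)+1)/((i:ℝ)+1)) * (∏ n ∈ Finset.Ioc m i, (1 + b n))⁻¹ := by
            apply mul_le_mul_of_nonneg_left _ (by positivity)
            exact inv_anti₀ (hprodpos i) (hexp i)
        _ = ∏ n ∈ Finset.Ioc m i, (((n:ℝ)/((n:ℝ)+1)) * (1 + b n)⁻¹) := by
            rw [Finset.prod_mul_distrib, tele m i hi, ← Finset.prod_inv_distrib]
        _ ≤ ∏ n ∈ Finset.Ioc m i, q n / p n := by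
            apply Finset.prod_le_prod
            · intro n hn
              have hbn := hb0 n
              have hn' := (Finset.mem_Ioc.mp hn).1
              have : (0:ℝ) ≤ (n:ℝ) := Nat.cast_nonneg n
              positivity
            · intro n hn
              exact hfac n (Finset.mem_Ioc.mp hn).1
    calc c0 * (((m:ℝ)+1)/((i:ℝ)+1)) * (Real.exp S)⁻¹
        = c0 * ((((m:ℝ)+1)/((i:ℝ)+1)) * (Real.exp S)⁻¹) := by ring
      _ ≤ c0 * ∏ n ∈ Finset.Ioc m i, q n / p n :=
          mul_le_mul_of_nonneg_left hlow hc0pos.le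
  -- now derive summability of harmonic-like series
  set c1 : ℝ := c0 * ((m:ℝ)+1) * (Real.exp S)⁻¹ with hc1
  have hc1pos : 0 < c1 := by positivity
  have hsum2 : Summable (fun i : ℕ => ∏ n ∈ Finset.Icc 1 (i + m), q n / p n) :=
    (summable_nat_add_iff (f := fun i : ℕ => ∏ n ∈ Finset.Icc 1 i, q n / p n) m).mpr hsum
  have hsum3 : Summable (fun i : ℕ => c1 / ((i:ℝ) + (m:ℝ) + 1)) := by
    apply Summable.of_nonneg_of_le (fun i => by positivity) _ hsum2
    intro i
    have h1 := hterm (i + m) (by omega)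
    have h2 : c0 * (((m:ℝ)+1)/(((i+m:ℕ):ℝ)+1)) * (Real.exp S)⁻¹
        = c1 / ((i:ℝ) + (m:ℝ) + 1) := by
      push_cast
      rw [hc1]
      field_simp
    rw [h2] at h1
    exact h1
  have hsum4 : Summable (fun i : ℕ => 1 / ((i:ℝ) + (m:ℝ) + 1)) := by
    have := hsum3.mul_left c1⁻¹
    have heq : (fun i : ℕ => c1⁻¹ * (c1 / ((i:ℝ) + (m:ℝ) + 1)))
        = fun i : ℕ => 1 / ((i:ℝ) + (m:ℝ) + 1) := by
      funext i
      field_simp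
    rwa [heq] at this
  have hsum5 : Summable (fun i : ℕ => 1 / ((i:ℝ) + 1)) := by
    have heq : (fun i : ℕ => 1 / ((i:ℝ) + (m:ℝ) + 1))
        = fun i : ℕ => 1 / (((i + m : ℕ):ℝ) + 1) := by
      funext i; push_cast; ring_nf
    rw [heq] at hsum4
    exact (summable_nat_add_iff (f := fun i : ℕ => 1 / ((i:ℝ) + 1)) m).mp hsum4
  have hsum6 : Summable (fun i : ℕ => 1 / (i:ℝ)) := by
    have heq : (fun i : ℕ => 1 / ((i:ℝ) + 1)) = fun i : ℕ => 1 / (((i + 1 : ℕ):ℝ)) := by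
      funext i; push_cast; ring_nf
    rw [heq] at hsum5
    exact (summable_nat_add_iff (f := fun i : ℕ => 1 / (i:ℝ)) 1).mp hsum5
  exact Real.not_summable_one_div_natCast hsum6
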